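/- Let n ≥ 1 and let Φ_A = {±e_i : 1 ≤ i ≤ n} ∪ {±(e_j − e_k) : 1 ≤ j ≠ k ≤ n} be the set of roots of type A_n in ℝ^n, with dual lattice M = ℤ^n. Let r ≥ 1 and let P_1, …, P_r ⊆ ℝ^n be lattice polytopes with respect to M (each the convex hull of a nonempty finite subset of M) such that the Minkowski sum P_1 + ⋯ + P_r is cut out by Φ_A, i.e., there exist a finite subset S ⊆ Φ_A and real numbers c_v with P_1 + ⋯ + P_r = {x ∈ ℝ^n : ⟨x, v⟩ ≥ c_v for all v ∈ S}. Then the Cayley sum P_1 * ⋯ * P_r, the convex hull of (P_1 × {e_1}) ∪ ⋯ ∪ (P_r × {e_r}) in ℝ^n × ℝ^r, is a normal lattice polytope with respect to the lattice M × ℤ^r: for every positive integer m, every point of M × ℤ^r lying in m·(P_1 * ⋯ * P_r) is a sum of m points of (M × ℤ^r) ∩ (P_1 * ⋯ * P_r). -/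

import Mathlib

open Finset Pointwise

/-- The `i`-th standard basis vector of `ℝ^n`. -/
noncomputable def stdBasis (n : ℕ) (i : Fin n) : Fin n → ℝ := fun j => if j = i then 1 else 0

/-- The standard inner product on `ℝ^n`. -/
noncomputable def innerProd {n : ℕ} (u v : Fin n → ℝ) : ℝ := ∑ i, u i * v i

/-- The roots of type `A_n`: `±e_i` and `±(e_j - e_k)` for `j ≠ k`. -/
def typeA (n : ℕ) : Set (Fin n → ℝ) :=
  {v | ∃ i, v = stdBasis n i ∨ v = -stdBasis n i} ∪
  {v | ∃ j k, j ≠ k ∧ v = stdBasis n j - stdBasis n k}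

/-- The lattice `ℤ^n ⊆ ℝ^n`. -/
def intLattice (n : ℕ) : Set (Fin n → ℝ) := {u | ∀ i, ∃ m : ℤ, u i = m}

lemma innerProd_add {n : ℕ} (x y v : Fin n → ℝ) :
    innerProd (x + y) v = innerProd x v + innerProd y v := by
  simp [innerProd, add_mul, Finset.sum_add_distrib]

lemma innerProd_smul {n : ℕ} (c : ℝ) (x v : Fin n → ℝ) :
    innerProd (c • x) v = c * innerProd x v := by
  simp [innerProd, Finset.mul_sum, mul_assoc]

lemma innerProd_sub {n : ℕ} (x y v : Fin n → ℝ) :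
    innerProd (x - y) v = innerProd x v - innerProd y v := by
  simp [innerProd, sub_mul, Finset.sum_sub_distrib]

lemma isLinearMap_innerProd {n : ℕ} (v : Fin n → ℝ) :
    IsLinearMap ℝ (fun x : Fin n → ℝ => innerProd x v) :=
  ⟨fun x y => innerProd_add x y v, fun c x => by simpa [smul_eq_mul] using innerProd_smul c x v⟩

lemma innerProd_sum {n : ℕ} {ι : Type*} (s : Finset ι) (g : ι → Fin n → ℝ) (v : Fin n → ℝ) :
    innerProd (∑ i ∈ s, g i) v = ∑ i ∈ s, innerProd (g i) v := by
  classical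
  induction s using Finset.induction with
  | empty => simp [innerProd]
  | insert _ _ h ih => rw [Finset.sum_insert h, innerProd_add, ih, Finset.sum_insert h]

lemma innerProd_stdBasis {n : ℕ} (x : Fin n → ℝ) (i : Fin n) :
    innerProd x (stdBasis n i) = x i := by
  simp [innerProd, stdBasis, mul_ite, Finset.sum_ite_eq']

lemma innerProd_neg_right {n : ℕ} (x v : Fin n → ℝ) : innerProd x (-v) = -innerProd x v := by
  simp [innerProd, mul_neg, Finset.sum_neg_distrib]

lemma innerProd_sub_right {n : ℕ} (x u w : Fin n → ℝ) :
    innerProd x (u - w) = innerProd x u - innerProd x w := by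
  simp [innerProd, mul_sub, Finset.sum_sub_distrib]

lemma floor_point_bounds {n : ℕ} {v : Fin n → ℝ} (hv : v ∈ typeA n) (x : Fin n → ℝ) (a b : ℤ)
    (h1 : (a : ℝ) ≤ innerProd x v) (h2 : innerProd x v ≤ (b : ℝ)) :
    (a : ℝ) ≤ innerProd (fun j => (⌊x j⌋ : ℝ)) v ∧
      innerProd (fun j => (⌊x j⌋ : ℝ)) v ≤ (b : ℝ) := by
  rcases hv with ⟨i, hi | hi⟩ | ⟨j, k, hjk, hveq⟩
  · subst hi
    rw [innerProd_stdBasis] at h1 h2 ⊢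
    constructor
    · exact_mod_cast Int.le_floor.mpr h1
    · exact le_trans (Int.floor_le _) h2
  · subst hi
    rw [innerProd_neg_right, innerProd_stdBasis] at h1 h2 ⊢
    constructor
    · have hx : x i ≤ ((-a : ℤ) : ℝ) := by push_cast; linarith
      have := Int.floor_le_floor hx
      rw [Int.floor_intCast] at this
      have : (⌊x i⌋ : ℝ) ≤ ((-a : ℤ) : ℝ) := by exact_mod_cast this
      push_cast at this ⊢
      linarith
    · have hx : ((-b : ℤ) : ℝ) ≤ x i := by push_cast; linarith
      have := Int.le_floor.mpr hx
      have : ((-b : ℤ) : ℝ) ≤ (⌊x i⌋ : ℝ) := by exact_mod_cast this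
      push_cast at this ⊢
      linarith
  · subst hveq
    rw [innerProd_sub_right, innerProd_stdBasis, innerProd_stdBasis] at h1 h2 ⊢
    constructor
    · have hx : x k + (a : ℝ) ≤ x j := by linarith
      have := Int.floor_le_floor hx
      rw [Int.floor_add_intCast] at this
      have : ((⌊x k⌋ + a : ℤ) : ℝ) ≤ (⌊x j⌋ : ℝ) := by exact_mod_cast this
      push_cast at this
      linarith
    · have hx : x j ≤ x k + (b : ℝ) := by linarith
      have := Int.floor_le_floor hx
      rw [Int.floor_add_intCast] at this
      have : (⌊x j⌋ : ℝ) ≤ ((⌊x k⌋ + b : ℤ) : ℝ) := by exact_mod_cast this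
      push_cast at this
      linarith

lemma innerProd_int {n : ℕ} {x v : Fin n → ℝ} (hx : x ∈ intLattice n) (hv : v ∈ typeA n) :
    ∃ a : ℤ, innerProd x v = (a : ℝ) := by
  rcases hv with ⟨i, hi | hi⟩ | ⟨j, k, hjk, hveq⟩
  · subst hi; rw [innerProd_stdBasis]; exact hx i
  · subst hi
    rw [innerProd_neg_right, innerProd_stdBasis]
    obtain ⟨a, ha⟩ := hx i
    exact ⟨-a, by rw [ha]; push_cast; ring⟩
  · subst hveq
    rw [innerProd_sub_right, innerProd_stdBasis, innerProd_stdBasis]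
    obtain ⟨a, ha⟩ := hx j
    obtain ⟨b, hb⟩ := hx k
    exact ⟨a - b, by rw [ha, hb]; push_cast; ring⟩

lemma stdBasis_mem_intLattice {r : ℕ} (i : Fin r) : stdBasis r i ∈ intLattice r := by
  intro j
  refine ⟨if j = i then 1 else 0, ?_⟩
  simp only [stdBasis]
  split <;> simp

/-- If `P 0, …, P (r-1)` are lattice polytopes (with respect to the lattice `M = ℤ^n`)
in `ℝ^n` whose Minkowski sum is cut out by the root system `A_n`, then the Cayley sum
`P 0 * ⋯ * P (r-1)`, the convex hull of `⋃ i, P i × {e i}` in `ℝ^n × ℝ^r`, is a normal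
lattice polytope with respect to `M × ℤ^r`: every lattice point of `m·(P 0 * ⋯ * P (r-1))`
is a sum of `m` lattice points of the Cayley sum. -/
theorem typeA_cayley_normal (n r : ℕ) (hn : 1 ≤ n) (hr : 1 ≤ r)
    (P : Fin r → Set (Fin n → ℝ))
    (hpoly : ∀ i, ∃ V : Set (Fin n → ℝ), V.Finite ∧ V.Nonempty ∧ V ⊆ intLattice n ∧
      P i = convexHull ℝ V)
    (hcut : ∃ S : Finset (Fin n → ℝ), ↑S ⊆ typeA n ∧ ∃ c : (Fin n → ℝ) → ℝ,
      {x | ∃ g : Fin r → (Fin n → ℝ), (∀ i, g i ∈ P i) ∧ x = ∑ i, g i}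
        = {x | ∀ v ∈ S, c v ≤ innerProd x v})
    (C : Set ((Fin n → ℝ) × (Fin r → ℝ)))
    (hC : C = convexHull ℝ (⋃ i, (fun p => (p, stdBasis r i)) '' P i))
    (m : ℕ) (hm : 0 < m) (x : (Fin n → ℝ) × (Fin r → ℝ))
    (hx : x.1 ∈ intLattice n ∧ x.2 ∈ intLattice r) (hxm : x ∈ (m : ℝ) • C) :
    ∃ f : Fin m → (Fin n → ℝ) × (Fin r → ℝ),
      (∀ j, ((f j).1 ∈ intLattice n ∧ (f j).2 ∈ intLattice r) ∧ f j ∈ C) ∧ x = ∑ j, f j := by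
  classical
  obtain ⟨S, hS, c, hQ⟩ := hcut
  choose V hVfin hVne hVsub hPeq using hpoly
  set Vf : Fin r → Finset (Fin n → ℝ) := fun i => (hVfin i).toFinset with hVf
  have hVfmem : ∀ i p, p ∈ Vf i ↔ p ∈ V i := fun i p => (hVfin i).mem_toFinset
  have hVfne : ∀ i, (Vf i).Nonempty := fun i => by
    obtain ⟨p, hp⟩ := hVne i; exact ⟨p, (hVfmem i p).mpr hp⟩
  have hVfsubP : ∀ i, ∀ p ∈ Vf i, p ∈ P i := fun i p hp => by
    rw [hPeq i]; exact subset_convexHull ℝ _ ((hVfmem i p).mp hp)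
  -- minimizers of linear functionals over the generating sets
  choose pmin hpmin_mem hpmin_le using fun (i : Fin r) (v : Fin n → ℝ) =>
    Finset.exists_min_image (Vf i) (fun p => innerProd p v) (hVfne i)
  have hmin_P : ∀ (i : Fin r) (v : Fin n → ℝ), ∀ y ∈ P i,
      innerProd (pmin i v) v ≤ innerProd y v := by
    intro i v y hy
    rw [hPeq i] at hy
    exact convexHull_min (fun p hp => hpmin_le i v p ((hVfmem i p).mpr hp))
      (convex_halfSpace_ge (isLinearMap_innerProd v) _) hy
  have hmin_int : ∀ (i : Fin r), ∀ v ∈ S, ∃ a : ℤ, innerProd (pmin i v) v = (a : ℝ) :=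
    fun i v hv => innerProd_int (hVsub i ((hVfmem i _).mp (hpmin_mem i v))) (hS hv)
  have hcv : ∀ v ∈ S, c v ≤ ∑ i, innerProd (pmin i v) v := by
    intro v hv
    have hmem : (∑ i, pmin i v) ∈
        {x | ∃ g : Fin r → (Fin n → ℝ), (∀ i, g i ∈ P i) ∧ x = ∑ i, g i} :=
      ⟨fun i => pmin i v, fun i => hVfsubP i _ (hpmin_mem i v), rfl⟩
    rw [hQ] at hmem
    have := hmem v hv
    rwa [innerProd_sum] at this
  -- Claim A (hard direction): inequality description implies membership in weighted sum
  have claimA : ∀ (z : Fin r → ℕ) (y : Fin n → ℝ),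
      (∀ v ∈ S, (∑ i, (z i : ℝ) * innerProd (pmin i v) v) ≤ innerProd y v) →
      ∃ g : Fin r → (Fin n → ℝ), (∀ i, g i ∈ P i) ∧ y = ∑ i, (z i : ℝ) • g i := by
    intro z y hy
    by_contra hcon
    push_neg at hcon
    set L : (Fin r → Fin n → ℝ) → (Fin n → ℝ) := fun g => ∑ i, (z i : ℝ) • g i with hL
    have hLlin : IsLinearMap ℝ L := by
      constructor
      · intro a b
        simp only [hL, Pi.add_apply, smul_add, Finset.sum_add_distrib]
      · intro t a
        simp only [hL, Pi.smul_apply, smul_smul, Finset.smul_sum]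
        congr 1; funext i; rw [mul_comm]
    have hyK : y ∉ L '' (Set.pi Set.univ fun i => P i) := by
      rintro ⟨g, hg, hgy⟩
      exact hcon g (fun i => hg i (Set.mem_univ i)) hgy.symm
    have hKconv : Convex ℝ (L '' (Set.pi Set.univ fun i => P i)) :=
      Convex.is_linear_image (convex_pi fun i _ => hPeq i ▸ convex_convexHull ℝ _) hLlin
    have hKcl : IsClosed (L '' (Set.pi Set.univ fun i => P i)) := by
      apply IsCompact.isClosed
      apply IsCompact.image
      · exact isCompact_univ_pi fun i => hPeq i ▸ (hVfin i).isCompact_convexHull ℝ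
      · exact continuous_finset_sum _ fun i _ => by fun_prop
    obtain ⟨f, u, hfu, hufy⟩ := geometric_hahn_banach_closed_point hKconv hKcl hyK
    choose pmax hpmax_mem hpmax_le using fun (i : Fin r) =>
      Finset.exists_max_image (Vf i) (fun p => f p) (hVfne i)
    have hmax_P : ∀ (i : Fin r), ∀ w ∈ P i, f w ≤ f (pmax i) := by
      intro i w hw
      rw [hPeq i] at hw
      exact convexHull_min (fun p hp => hpmax_le i p ((hVfmem i p).mpr hp))
        (convex_halfSpace_le ⟨f.map_add, f.map_smul⟩ _) hw
    set M : ℕ := (∑ i, z i) + 1 with hM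
    have hzM : ∀ i, z i ≤ M :=
      fun i => le_trans (Finset.single_le_sum (fun _ _ => Nat.zero_le _) (Finset.mem_univ i))
        (Nat.le_succ _)
    have hM0 : (0 : ℝ) < (M : ℝ) := by exact_mod_cast Nat.succ_pos _
    have hsplit : ∀ i, (z i : ℝ) + ((M - z i : ℕ) : ℝ) = (M : ℝ) := by
      intro i
      rw [Nat.cast_sub (hzM i)]; ring
    set q : Fin n → ℝ := ∑ i, ((M - z i : ℕ) : ℝ) • pmax i with hq
    have hyq : ∀ v ∈ S, (M : ℝ) * ∑ i, innerProd (pmin i v) v ≤ innerProd (y + q) v := by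
      intro v hv
      rw [innerProd_add]
      have h1 := hy v hv
      have h2 : ∑ i, ((M - z i : ℕ) : ℝ) * innerProd (pmin i v) v ≤ innerProd q v := by
        rw [hq, innerProd_sum]
        apply Finset.sum_le_sum
        intro i _
        rw [innerProd_smul]
        have h3 : innerProd (pmin i v) v ≤ innerProd (pmax i) v :=
          hpmin_le i v _ (hpmax_mem i)
        have h4 : (0 : ℝ) ≤ ((M - z i : ℕ) : ℝ) := by positivity
        exact mul_le_mul_of_nonneg_left h3 h4
      have h5 : (M : ℝ) * ∑ i, innerProd (pmin i v) v =
          ∑ i, (z i : ℝ) * innerProd (pmin i v) v +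
          ∑ i, ((M - z i : ℕ) : ℝ) * innerProd (pmin i v) v := by
        rw [Finset.mul_sum, ← Finset.sum_add_distrib]
        exact Finset.sum_congr rfl fun i _ => by rw [← add_mul, hsplit i]
      linarith
    have hyqQ : ((M : ℝ)⁻¹ • (y + q)) ∈
        {x | ∃ g : Fin r → (Fin n → ℝ), (∀ i, g i ∈ P i) ∧ x = ∑ i, g i} := by
      rw [hQ]
      intro v hv
      rw [innerProd_smul]
      have h6 := hyq v hv
      have h7 := hcv v hv
      have h8 : ∑ i, innerProd (pmin i v) v ≤ (M : ℝ)⁻¹ * innerProd (y + q) v := by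
        rw [le_inv_mul_iff₀ hM0]
        exact h6
      linarith
    obtain ⟨g, hg, hgeq⟩ := hyqQ
    have hyq_eq : y + q = ∑ i, (M : ℝ) • g i := by
      have h9 : y + q = (M : ℝ) • ((M : ℝ)⁻¹ • (y + q)) := by
        rw [smul_inv_smul₀ (ne_of_gt hM0)]
      rw [h9, hgeq, Finset.smul_sum]
    -- now derive the contradiction with f
    have hfy : ∑ i, (z i : ℝ) * f (pmax i) < f y := by
      have hmemK : L (fun i => pmax i) ∈ L '' (Set.pi Set.univ fun i => P i) :=
        ⟨fun i => pmax i, fun i _ => hVfsubP i _ (hpmax_mem i), rfl⟩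
      have h10 := hfu _ hmemK
      have h11 : f (L fun i => pmax i) = ∑ i, (z i : ℝ) * f (pmax i) := by
        rw [hL]
        rw [map_sum]
        exact Finset.sum_congr rfl fun i _ => by rw [f.map_smul, smul_eq_mul]
      rw [h11] at h10
      linarith
    have hfq : f q = ∑ i, ((M - z i : ℕ) : ℝ) * f (pmax i) := by
      rw [hq, map_sum]
      exact Finset.sum_congr rfl fun i _ => by rw [f.map_smul, smul_eq_mul]
    have hfyq : f (y + q) = f y + f q := f.map_add y q
    have hfyq2 : f (y + q) ≤ ∑ i, (M : ℝ) * f (pmax i) := by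
      rw [hyq_eq, map_sum]
      apply Finset.sum_le_sum
      intro i _
      rw [f.map_smul, smul_eq_mul]
      exact mul_le_mul_of_nonneg_left (hmax_P i _ (hg i)) hM0.le
    have h12 : ∑ i, (M : ℝ) * f (pmax i) =
        ∑ i, (z i : ℝ) * f (pmax i) + ∑ i, ((M - z i : ℕ) : ℝ) * f (pmax i) := by
      rw [← Finset.sum_add_distrib]
      exact Finset.sum_congr rfl fun i _ => by rw [← add_mul, hsplit i]
    linarith
  -- basic facts about C
  have genC : ∀ (i : Fin r), ∀ p ∈ P i, (p, stdBasis r i) ∈ C := by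
    intro i p hp
    rw [hC]
    exact subset_convexHull ℝ _ (Set.mem_iUnion.mpr ⟨i, ⟨p, hp, rfl⟩⟩)
  have hCsub : ∀ T : Set ((Fin n → ℝ) × (Fin r → ℝ)), Convex ℝ T →
      (∀ (i : Fin r), ∀ p ∈ P i, (p, stdBasis r i) ∈ T) → C ⊆ T := by
    intro T hT hgen
    rw [hC]
    apply convexHull_min _ hT
    intro w hw
    rw [Set.mem_iUnion] at hw
    obtain ⟨i, p, hp, rfl⟩ := hw
    exact hgen i p hp
  -- the main induction
  have aux : ∀ k : ℕ, ∀ z : Fin r → ℕ, (∑ i, z i) = k + 1 → ∀ y : Fin n → ℝ,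
      y ∈ intLattice n →
      (∀ v ∈ S, (∑ i, (z i : ℝ) * innerProd (pmin i v) v) ≤ innerProd y v) →
      ∃ f : Fin (k + 1) → (Fin n → ℝ) × (Fin r → ℝ),
        (∀ j, ((f j).1 ∈ intLattice n ∧ (f j).2 ∈ intLattice r) ∧ f j ∈ C) ∧
        y = ∑ j, (f j).1 ∧ (fun i => (z i : ℝ)) = ∑ j, (f j).2 := by
    intro k
    induction k with
    | zero =>
      intro z hz1 y hyl hy
      obtain ⟨g, hg, hgy⟩ := claimA z y hy
      have hex : ∃ i0, z i0 ≠ 0 := by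
        by_contra h
        push_neg at h
        rw [Finset.sum_eq_zero (fun i _ => h i)] at hz1
        omega
      obtain ⟨i0, hi0⟩ := hex
      have hle : z i0 ≤ ∑ i, z i := Finset.single_le_sum
        (f := z) (fun _ _ => Nat.zero_le _) (Finset.mem_univ i0)
      have hzi0 : z i0 = 1 := by omega
      have hothers : ∀ i, i ≠ i0 → z i = 0 := by
        intro i hi
        have h1 : z i0 + ∑ j ∈ Finset.univ.erase i0, z j = ∑ j, z j :=
          Finset.add_sum_erase _ _ (Finset.mem_univ i0)
        have h2 : z i ≤ ∑ j ∈ Finset.univ.erase i0, z j :=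
          Finset.single_le_sum (f := z) (fun _ _ => Nat.zero_le _)
            (Finset.mem_erase.mpr ⟨hi, Finset.mem_univ i⟩)
        omega
      have hyg : y = g i0 := by
        rw [hgy, Finset.sum_eq_single i0]
        · rw [hzi0]; simp
        · intro i _ hi; rw [hothers i hi]; simp
        · intro h; exact absurd (Finset.mem_univ i0) h
      have hyP : y ∈ P i0 := by rw [hyg]; exact hg i0
      refine ⟨fun _ => (y, stdBasis r i0), fun j => ⟨⟨hyl, stdBasis_mem_intLattice i0⟩,
        genC i0 y hyP⟩, by simp, ?_⟩
      funext i
      rw [Fin.sum_univ_one]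
      by_cases h : i = i0
      · subst h; simp [stdBasis, hzi0]
      · simp [stdBasis, hothers i h, h]
    | succ k ih =>
      intro z hzsum y hyl hy
      obtain ⟨g, hg, hgy⟩ := claimA z y hy
      have hex : ∃ i0, z i0 ≠ 0 := by
        by_contra h
        push_neg at h
        rw [Finset.sum_eq_zero (fun i _ => h i)] at hzsum
        omega
      obtain ⟨i0, hi0⟩ := hex
      have hi0' : 1 ≤ z i0 := Nat.one_le_iff_ne_zero.mpr hi0
      set z' : Fin r → ℕ := Function.update z i0 (z i0 - 1) with hz'
      have hz'val : ∀ i, (z i : ℝ) = (z' i : ℝ) + (if i = i0 then 1 else 0) := by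
        intro i
        by_cases h : i = i0
        · subst h
          rw [hz', Function.update_self, if_pos rfl, Nat.cast_sub hi0']
          push_cast; ring
        · rw [hz', Function.update_of_ne h, if_neg h, add_zero]
      have hz'sum : ∑ i, z' i = k + 1 := by
        have h1 : z i0 + ∑ j ∈ Finset.univ.erase i0, z j = ∑ j, z j :=
          Finset.add_sum_erase _ _ (Finset.mem_univ i0)
        rw [hz', Finset.sum_update_of_mem (Finset.mem_univ i0)]
        have h2 : ∑ x ∈ Finset.univ \ {i0}, z x = ∑ j ∈ Finset.univ.erase i0, z j := by
          rw [Finset.sdiff_singleton_eq_erase]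
        omega
      have hq_low : ∀ v ∈ S, innerProd (pmin i0 v) v ≤ innerProd (g i0) v :=
        fun v hv => hmin_P i0 v _ (hg i0)
      have hysplit : ∀ v : Fin n → ℝ,
          innerProd y v = ∑ i, (z' i : ℝ) * innerProd (g i) v + innerProd (g i0) v := by
        intro v
        rw [hgy, innerProd_sum]
        have hterm : ∀ i : Fin r, innerProd ((z i : ℝ) • g i) v =
            (z' i : ℝ) * innerProd (g i) v +
              (if i = i0 then innerProd (g i) v else 0) := by
          intro i
          rw [innerProd_smul, hz'val i, add_mul, ite_mul, one_mul, zero_mul]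
        rw [Finset.sum_congr rfl fun i _ => hterm i, Finset.sum_add_distrib]
        congr 1
        rw [Finset.sum_ite_eq' Finset.univ i0 (fun i => innerProd (g i) v),
          if_pos (Finset.mem_univ i0)]
      have hq_up : ∀ v ∈ S, innerProd (g i0) v ≤
          innerProd y v - ∑ i, (z' i : ℝ) * innerProd (pmin i v) v := by
        intro v hv
        have h1 := hysplit v
        have h2 : ∑ i, (z' i : ℝ) * innerProd (pmin i v) v ≤
            ∑ i, (z' i : ℝ) * innerProd (g i) v :=
          Finset.sum_le_sum fun i _ =>
            mul_le_mul_of_nonneg_left (hmin_P i v _ (hg i)) (by positivity)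
        linarith
      set p : Fin n → ℝ := fun j => (⌊g i0 j⌋ : ℝ) with hp
      have hp_bounds : ∀ v ∈ S, innerProd (pmin i0 v) v ≤ innerProd p v ∧
          innerProd p v ≤ innerProd y v - ∑ i, (z' i : ℝ) * innerProd (pmin i v) v := by
        intro v hv
        obtain ⟨a, ha⟩ := hmin_int i0 v hv
        choose A hA using fun i => hmin_int i v hv
        obtain ⟨ay, hay⟩ := innerProd_int hyl (hS hv)
        have hbv : innerProd y v - ∑ i, (z' i : ℝ) * innerProd (pmin i v) v =
            ((ay - ∑ i, (z' i : ℤ) * A i : ℤ) : ℝ) := by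
          push_cast
          rw [hay]
          congr 1
          exact Finset.sum_congr rfl fun i _ => by rw [hA i]
        have hlow := hq_low v hv
        have hup := hq_up v hv
        rw [ha] at hlow
        rw [hbv] at hup
        have hfl := floor_point_bounds (hS hv) (g i0) _ _ hlow hup
        rw [ha, hbv]
        exact hfl
      have hpP : p ∈ P i0 := by
        set zδ : Fin r → ℕ := fun i => if i = i0 then 1 else 0 with hzδ
        have hδ : ∀ v ∈ S,
            (∑ i, (zδ i : ℝ) * innerProd (pmin i v) v) ≤
              innerProd p v := by
          intro v hv
          have hcastite : ∀ i : Fin r,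
              (zδ i : ℝ) * innerProd (pmin i v) v =
                if i = i0 then innerProd (pmin i v) v else 0 := by
            intro i; rw [hzδ]; dsimp only; split <;> simp
          rw [Finset.sum_congr rfl fun i _ => hcastite i,
            Finset.sum_ite_eq' Finset.univ i0 (fun i => innerProd (pmin i v) v),
            if_pos (Finset.mem_univ i0)]
          exact (hp_bounds v hv).1
        obtain ⟨g', hg', hpg'⟩ := claimA zδ p hδ
        have hpe : p = g' i0 := by
          rw [hpg', Finset.sum_eq_single i0]
          · simp [hzδ]
          · intro i _ hi; simp [hzδ, hi]
          · intro h; exact absurd (Finset.mem_univ i0) h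
        rw [hpe]; exact hg' i0
      have hpl : p ∈ intLattice n := fun j => ⟨⌊g i0 j⌋, rfl⟩
      have hy2l : (y - p) ∈ intLattice n := by
        intro j
        obtain ⟨aj, haj⟩ := hyl j
        refine ⟨aj - ⌊g i0 j⌋, ?_⟩
        rw [Pi.sub_apply, haj, hp]
        push_cast; ring
      have hy2ineq : ∀ v ∈ S,
          (∑ i, (z' i : ℝ) * innerProd (pmin i v) v) ≤ innerProd (y - p) v := by
        intro v hv
        rw [innerProd_sub]
        have := (hp_bounds v hv).2
        linarith
      obtain ⟨f', hf', hf'y, hf'z⟩ := ih z' hz'sum (y - p) hy2l hy2ineq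
      set F : Fin (k + 1 + 1) → (Fin n → ℝ) × (Fin r → ℝ) :=
        Fin.cons (p, stdBasis r i0) f' with hF
      have hFsum : ∑ j, F j = (p, stdBasis r i0) + ∑ j, f' j := by
        rw [hF]; exact Fin.sum_cons _ _
      refine ⟨F, ?_, ?_, ?_⟩
      · intro j
        refine Fin.cases ?_ ?_ j
        · rw [hF]
          simp only [Fin.cons_zero]
          exact ⟨⟨hpl, stdBasis_mem_intLattice i0⟩, genC i0 p hpP⟩
        · intro j'
          rw [hF]
          simp only [Fin.cons_succ]
          exact hf' j'
      · have h1 : (∑ j, F j).1 = ∑ j, (F j).1 := Prod.fst_sum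
        rw [← h1, hFsum, Prod.fst_add, Prod.fst_sum, ← hf'y]
        abel
      · have h2 : (∑ j, F j).2 = ∑ j, (F j).2 := Prod.snd_sum
        rw [← h2, hFsum, Prod.snd_add, Prod.snd_sum, ← hf'z]
        funext i
        rw [Pi.add_apply, hz'val i]
        simp [stdBasis]
        ring
  -- extract data about x
  obtain ⟨w, hwC, hxw⟩ := Set.mem_smul_set.mp hxm
  have hmR : (0 : ℝ) < (m : ℝ) := by exact_mod_cast hm
  have hsb_nonneg : ∀ i j : Fin r, 0 ≤ stdBasis r i j := by
    intro i j; by_cases h : j = i <;> simp [stdBasis, h]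
  have hw1 : ∀ i0 : Fin r, 0 ≤ w.2 i0 := by
    intro i0
    refine hCsub {u | 0 ≤ u.2 i0} (convex_halfSpace_ge ⟨fun a b => rfl, fun t a => rfl⟩ 0)
      (fun i p _ => ?_) hwC
    exact hsb_nonneg i i0
  have hw2 : ∑ i, w.2 i = 1 := by
    have hlin : IsLinearMap ℝ (fun u : (Fin n → ℝ) × (Fin r → ℝ) => ∑ i, u.2 i) := by
      constructor
      · intro a b; simp [Finset.sum_add_distrib]
      · intro t a; simp [Finset.mul_sum]
    refine hCsub {u | ∑ i, u.2 i = 1} (convex_hyperplane hlin 1) (fun i p _ => ?_) hwC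
    show (∑ j, stdBasis r i j) = 1
    simp only [stdBasis]
    rw [Finset.sum_ite_eq' Finset.univ i (fun _ => (1 : ℝ)), if_pos (Finset.mem_univ i)]
  have hw3 : ∀ v ∈ S, ∑ i, w.2 i * innerProd (pmin i v) v ≤ innerProd w.1 v := by
    intro v hv
    have hlin : IsLinearMap ℝ (fun u : (Fin n → ℝ) × (Fin r → ℝ) =>
        ∑ i, u.2 i * innerProd (pmin i v) v - innerProd u.1 v) := by
      constructor
      · intro a b
        simp only [Prod.fst_add, Prod.snd_add, Pi.add_apply, innerProd_add, add_mul,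
          Finset.sum_add_distrib]
        ring
      · intro t a
        simp only [Prod.smul_fst, Prod.smul_snd, Pi.smul_apply, smul_eq_mul, innerProd_smul,
          mul_sub, Finset.mul_sum, mul_assoc]
    have hTconv : Convex ℝ {u : (Fin n → ℝ) × (Fin r → ℝ) |
        ∑ i, u.2 i * innerProd (pmin i v) v ≤ innerProd u.1 v} := by
      have hc := convex_halfSpace_le hlin 0
      have hset : {u : (Fin n → ℝ) × (Fin r → ℝ) |
          ∑ i, u.2 i * innerProd (pmin i v) v ≤ innerProd u.1 v} =
          {w | ∑ i, w.2 i * innerProd (pmin i v) v - innerProd w.1 v ≤ 0} := by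
        ext u
        simp [sub_nonpos]
      rw [hset]; exact hc
    refine hCsub _ hTconv (fun i p hp => ?_) hwC
    show ∑ j, stdBasis r i j * innerProd (pmin j v) v ≤ innerProd p v
    have hsum : ∑ j, stdBasis r i j * innerProd (pmin j v) v = innerProd (pmin i v) v := by
      simp only [stdBasis, ite_mul, one_mul, zero_mul]
      rw [Finset.sum_ite_eq' Finset.univ i (fun j => innerProd (pmin j v) v),
        if_pos (Finset.mem_univ i)]
    rw [hsum]
    exact hmin_P i v p hp
  have hx1 : x.1 = (m : ℝ) • w.1 := by rw [← hxw]; rfl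
  have hx2 : ∀ i, x.2 i = (m : ℝ) * w.2 i := by intro i; rw [← hxw]; rfl
  obtain ⟨hxl1, hxl2⟩ := hx
  choose zi hzi using hxl2
  have hzi_nonneg : ∀ i, 0 ≤ zi i := by
    intro i
    have h0 : (0 : ℝ) ≤ (zi i : ℝ) := by
      rw [← hzi i, hx2 i]
      exact mul_nonneg hmR.le (hw1 i)
    exact_mod_cast h0
  set z : Fin r → ℕ := fun i => (zi i).toNat with hzdef
  have hzr : ∀ i, (z i : ℝ) = x.2 i := by
    intro i
    rw [hzi i, hzdef]
    exact_mod_cast congrArg (fun t : ℤ => (t : ℝ)) (Int.toNat_of_nonneg (hzi_nonneg i))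
  have hzsum : ∑ i, z i = m := by
    have hR : (∑ i, (z i : ℝ)) = (m : ℝ) := by
      rw [Finset.sum_congr rfl fun i _ => hzr i]
      rw [Finset.sum_congr rfl fun i _ => hx2 i, ← Finset.mul_sum, hw2, mul_one]
    exact_mod_cast hR
  have hyineq : ∀ v ∈ S, (∑ i, (z i : ℝ) * innerProd (pmin i v) v) ≤ innerProd x.1 v := by
    intro v hv
    have h1 := hw3 v hv
    rw [hx1, innerProd_smul]
    have h2 : ∑ i, (z i : ℝ) * innerProd (pmin i v) v =
        (m : ℝ) * ∑ i, w.2 i * innerProd (pmin i v) v := by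
      rw [Finset.mul_sum]
      refine Finset.sum_congr rfl fun i _ => ?_
      rw [hzr i, hx2 i]; ring
    rw [h2]
    exact mul_le_mul_of_nonneg_left h1 hmR.le
  obtain ⟨k, hk⟩ : ∃ k, m = k + 1 := ⟨m - 1, (Nat.succ_pred_eq_of_pos hm).symm⟩
  subst hk
  obtain ⟨f, hf, hfy, hfz⟩ := aux k z hzsum x.1 hxl1 hyineq
  refine ⟨f, hf, ?_⟩
  rw [Prod.ext_iff]
  constructor
  · rw [Prod.fst_sum]; exact hfy
  · rw [Prod.snd_sum, ← hfz]
    funext i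
    rw [hzr i]
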